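/- arXiv:2501.00507 — 2 statements merged into one kernel-verified Lean document; each statement's English description precedes it below -/
import Mathlib

section
/- Let E be a real normed vector space, n a positive integer, q ∈ ℝⁿ, r₁,…,rₙ ≥ 0, v_obs ≥ 0, d ≥ 0 and t* ≥ 0. Suppose p : ℝⁿ → E satisfies the enclosing-radii bound at root q with radii r_j, and suppose o : [0, t*] → E is v_obs-Lipschitz with ‖p(q) − o(0)‖ ≥ d. Then for every t ∈ [0, t*] and every configuration y ∈ ℝⁿ lying in the dynamic expanded bubble at time t (i.e. Σⱼ rⱼ·|yⱼ − qⱼ| + v_obs·t ≤ d), one has ‖p(y) − o(t)‖ ≥ d − Σⱼ rⱼ·|yⱼ − qⱼ| − v_obs·t ≥ 0; in particular, if the bubble inequality is strict then p(y) ≠ o(t), so no collision between the tracked robot point and the obstacle point can occur. -/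
open Finset

/-- **Dynamic expanded bubble safety (single bubble).**
If `p` satisfies the enclosing-radii bound at root `q` with radii `r j`,
the obstacle point `o` is `v_obs`-Lipschitz on `[0, t*]`, and the initial
robot-obstacle distance is at least `d`, then any configuration `y` inside the
dynamic expanded bubble at time `t` keeps a distance at least
`d - Σⱼ rⱼ·|yⱼ - qⱼ| - v_obs·t ≥ 0` from the obstacle; if the bubble
inequality is strict, no collision can occur. -/
theorem dynamic_expanded_bubble_safety
    {E : Type*} [NormedAddCommGroup E] [NormedSpace ℝ E]
    (n : ℕ) (hn : 0 < n) (q : Fin n → ℝ) (r : Fin n → ℝ) (hr : ∀ j, 0 ≤ r j)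
    (v_obs : ℝ) (hv : 0 ≤ v_obs) (d : ℝ) (hd : 0 ≤ d)
    (tstar : ℝ) (htstar : 0 ≤ tstar)
    (p : (Fin n → ℝ) → E)
    (hp : ∀ y : Fin n → ℝ, ‖p y - p q‖ ≤ ∑ j, r j * |y j - q j|)
    (o : ℝ → E)
    (ho : ∀ s ∈ Set.Icc (0 : ℝ) tstar, ∀ t ∈ Set.Icc (0 : ℝ) tstar,
      ‖o s - o t‖ ≤ v_obs * |s - t|)
    (hinit : d ≤ ‖p q - o 0‖) :
    ∀ t ∈ Set.Icc (0 : ℝ) tstar, ∀ y : Fin n → ℝ,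
      (∑ j, r j * |y j - q j|) + v_obs * t ≤ d →
      (d - (∑ j, r j * |y j - q j|) - v_obs * t ≤ ‖p y - o t‖ ∧
        0 ≤ d - (∑ j, r j * |y j - q j|) - v_obs * t) ∧
      ((∑ j, r j * |y j - q j|) + v_obs * t < d → p y ≠ o t) := by
  intro t ht y hy
  have h0 : (0 : ℝ) ∈ Set.Icc (0 : ℝ) tstar := ⟨le_refl 0, htstar⟩
  have hot : ‖o t - o 0‖ ≤ v_obs * t := by
    have := ho t ht 0 h0
    simpa [abs_of_nonneg ht.1] using this
  have hkey : d ≤ ‖p y - o t‖ + (∑ j, r j * |y j - q j|) + v_obs * t := by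
    have h1 : ‖p q - o 0‖ ≤ ‖p q - p y‖ + ‖p y - o t‖ + ‖o t - o 0‖ := by
      have := norm_sub_le_norm_sub_add_norm_sub (p q) (p y) (o 0)
      have h2 := norm_sub_le_norm_sub_add_norm_sub (p y) (o t) (o 0)
      linarith
    have h3 : ‖p q - p y‖ ≤ ∑ j, r j * |y j - q j| := by
      have := hp y
      rwa [norm_sub_rev] at this
    linarith
  refine ⟨⟨by linarith, by linarith⟩, fun hlt hcol => ?_⟩
  rw [hcol, sub_self, norm_zero] at hkey
  linarith
end

section
/- (Guaranteed safe motion along a chain of dynamic expanded bubbles.) Let E be a real normed vector space, v_obs ≥ 0, and let o : [τ₀, τ_K] → E be a v_obs-Lipschitz obstacle-point trajectory. Let π : [τ₀, τ_K] → ℝⁿ be a robot joint-space trajectory, let τ₀ < τ₁ < … < τ_K be root times with roots q_k = π(τ_k), and let p : ℝⁿ → E give the workspace position of a fixed robot point. Suppose that for every k ∈ {0,…,K−1}: (i) p satisfies the enclosing-radii bound at root q_k with radii r_{k,1},…,r_{k,n} ≥ 0; (ii) ‖p(q_k) − o(τ_k)‖ ≥ d_k for some d_k ≥ 0; and (iii)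 for all t ∈ [τ_k, τ_{k+1}], the configuration π(t) is in the k-th dynamic expanded bubble at time t − τ_k, i.e. Σⱼ r_{k,j}·|πⱼ(t) − q_{k,j}| + v_obs·(t − τ_k) ≤ d_k. Then for every t ∈ [τ₀, τ_K] one has ‖p(π(t)) − o(t)‖ ≥ 0, and at every time t in a segment where the inequality in (iii) is strict one has p(π(t)) ≠ o(t); i.e., the robot moves safely within the boundaries of the chain of connected dynamic expanded bubbles. -/
open Finset

/-- **Guaranteed safe motion along a chain of dynamic expanded bubbles.**
Given root times `τ 0 < τ 1 < … < τ K` with roots `q_k = π (τ k)`, if on each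
segment `[τ k, τ (k+1)]` the trajectory stays in the `k`-th dynamic expanded
bubble, the enclosing-radii bound holds at each root, and the robot-obstacle
distance at each root time is at least `d k`, then the robot-obstacle
distance is nonnegative throughout, and at every time in a segment where the
bubble inequality is strict there is no collision. -/
theorem safe_motion_chain_of_dynamic_expanded_bubbles
    {E : Type*} [NormedAddCommGroup E] [NormedSpace ℝ E]
    (n K : ℕ) (hn : 0 < n) (hK : 0 < K)
    (τ : Fin (K + 1) → ℝ) (hτ : StrictMono τ)
    (v_obs : ℝ) (hv : 0 ≤ v_obs)
    (o : ℝ → E)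
    (ho : ∀ s ∈ Set.Icc (τ 0) (τ (Fin.last K)), ∀ t ∈ Set.Icc (τ 0) (τ (Fin.last K)),
      ‖o s - o t‖ ≤ v_obs * |s - t|)
    (π : ℝ → Fin n → ℝ)
    (p : (Fin n → ℝ) → E)
    (r : Fin K → Fin n → ℝ) (hr : ∀ k j, 0 ≤ r k j)
    (d : Fin K → ℝ) (hd : ∀ k, 0 ≤ d k)
    (henc : ∀ k : Fin K, ∀ y : Fin n → ℝ,
      ‖p y - p (π (τ k.castSucc))‖ ≤ ∑ j, r k j * |y j - π (τ k.castSucc) j|)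
    (hdist : ∀ k : Fin K, d k ≤ ‖p (π (τ k.castSucc)) - o (τ k.castSucc)‖)
    (hbubble : ∀ k : Fin K, ∀ t ∈ Set.Icc (τ k.castSucc) (τ k.succ),
      (∑ j, r k j * |π t j - π (τ k.castSucc) j|) + v_obs * (t - τ k.castSucc) ≤ d k) :
    (∀ t ∈ Set.Icc (τ 0) (τ (Fin.last K)), 0 ≤ ‖p (π t) - o t‖) ∧
    (∀ k : Fin K, ∀ t ∈ Set.Icc (τ k.castSucc) (τ k.succ),
      (∑ j, r k j * |π t j - π (τ k.castSucc) j|) + v_obs * (t - τ k.castSucc) < d k →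
      p (π t) ≠ o t) := by

  constructor
  · intro t _; exact norm_nonneg _
  · intro k t ht hlt hcol
    have hmono := hτ.monotone
    have hT0 : τ 0 ≤ τ k.castSucc := hmono (Fin.zero_le _)
    have hTK : τ k.succ ≤ τ (Fin.last K) := hmono (Fin.le_last _)
    have htI : t ∈ Set.Icc (τ 0) (τ (Fin.last K)) :=
      ⟨hT0.trans ht.1, ht.2.trans hTK⟩
    have hkI : τ k.castSucc ∈ Set.Icc (τ 0) (τ (Fin.last K)) :=
      ⟨hT0, ((hτ k.castSucc_lt_succ).le).trans hTK⟩
    have ho' := ho (τ k.castSucc) hkI t htI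
    have habs : |τ k.castSucc - t| = t - τ k.castSucc := by
      rw [abs_sub_comm, abs_of_nonneg (by linarith [ht.1])]
    rw [habs] at ho'
    have h1 := henc k (π t)
    have h2 := hdist k
    have key : ‖p (π (τ k.castSucc)) - o (τ k.castSucc)‖ ≤
        ‖p (π (τ k.castSucc)) - p (π t)‖ + ‖o t - o (τ k.castSucc)‖ := by
      have heq : p (π (τ k.castSucc)) - o (τ k.castSucc) =
          (p (π (τ k.castSucc)) - p (π t)) + (o t - o (τ k.castSucc)) := by
        rw [hcol]; abel
      rw [heq]; exact norm_add_le _ _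
    have e1 : ‖p (π t) - p (π (τ k.castSucc))‖ = ‖p (π (τ k.castSucc)) - p (π t)‖ :=
      norm_sub_rev _ _
    have e2 : ‖p (π (τ k.castSucc)) - o (τ k.castSucc)‖ =
        ‖o (τ k.castSucc) - p (π (τ k.castSucc))‖ := norm_sub_rev _ _
    have e3 : ‖o t - o (τ k.castSucc)‖ = ‖o (τ k.castSucc) - o t‖ := norm_sub_rev _ _
    linarith
end
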